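/- For every integer y, the point (-1, y) belongs to the discrete Sierpinski triangle S_∞ if and only if there exists an integer m ≥ 1 with y = 2^m − 2 or y = 2^m − 1; and the same equivalence holds for the point (0, y). In particular, the two center columns x = −1 and x = 0 of S_∞ are occupied exactly at the heights 2^m − 2 and 2^m − 1 for m ≥ 1. -/

import Mathlib

/-- Stages of the discrete (non-tree) Sierpinski triangle:
`S_0 = {(0,0),(-1,0),(0,1),(-1,1)}` and
`S_{i+1} = S_i ∪ (S_i + 2^i·(1,2)) ∪ (S_i + 2^i·(-1,2))`. -/
def sierpTri : ℕ → Finset (ℤ × ℤ)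
  | 0 => {(0, 0), (-1, 0), (0, 1), (-1, 1)}
  | i + 1 =>
      sierpTri i ∪ (sierpTri i).image (· + ((2 : ℤ) ^ i, 2 ^ (i + 1))) ∪
        (sierpTri i).image (· + (-(2 : ℤ) ^ i, 2 ^ (i + 1)))

/-- The discrete Sierpinski triangle `S_∞ = ⋃ i, S_i`. -/
def sierpTriInf : Set (ℤ × ℤ) := ⋃ i, (sierpTri i : Set (ℤ × ℤ))

lemma mem_shift {s : Finset (ℤ × ℤ)} (v c : ℤ × ℤ) :
    c ∈ s.image (· + v) ↔ c - v ∈ s := by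
  simp only [Finset.mem_image]
  constructor
  · rintro ⟨a, ha, rfl⟩; simpa using ha
  · intro h; exact ⟨c - v, h, by abel⟩

lemma sierpTri_succ_mem (i : ℕ) (c : ℤ × ℤ) :
    c ∈ sierpTri (i + 1) ↔ c ∈ sierpTri i ∨
      c - ((2 : ℤ) ^ i, 2 ^ (i + 1)) ∈ sierpTri i ∨
      c - (-(2 : ℤ) ^ i, 2 ^ (i + 1)) ∈ sierpTri i := by
  show c ∈ _ ∪ _ ∪ _ ↔ _
  rw [Finset.mem_union, Finset.mem_union, mem_shift, mem_shift, or_assoc]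

lemma sierpTri_key (i : ℕ) :
    (∀ p ∈ sierpTri i, -(2 : ℤ) ^ i ≤ p.1 ∧ p.1 ≤ 2 ^ i - 1) ∧
    (∀ y : ℤ,
      (((-1 : ℤ), y) ∈ sierpTri i ↔
        ∃ m : ℕ, 1 ≤ m ∧ m ≤ i + 1 ∧ (y = 2 ^ m - 2 ∨ y = 2 ^ m - 1)) ∧
      (((0 : ℤ), y) ∈ sierpTri i ↔
        ∃ m : ℕ, 1 ≤ m ∧ m ≤ i + 1 ∧ (y = 2 ^ m - 2 ∨ y = 2 ^ m - 1)) ∧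
      ((-(2 : ℤ) ^ i, y) ∈ sierpTri i ↔ (y = 2 ^ (i + 1) - 2 ∨ y = 2 ^ (i + 1) - 1)) ∧
      (((2 : ℤ) ^ i - 1, y) ∈ sierpTri i ↔ (y = 2 ^ (i + 1) - 2 ∨ y = 2 ^ (i + 1) - 1))) := by
  induction i with
  | zero =>
      constructor
      · intro p hp
        fin_cases hp <;> norm_num
      · intro y
        have hmem : ∀ x : ℤ, ((x, y) ∈ sierpTri 0 ↔ ((x = 0 ∨ x = -1) ∧ (y = 0 ∨ y = 1))) := by
          intro x
          show (x, y) ∈ ({(0, 0), (-1, 0), (0, 1), (-1, 1)} : Finset (ℤ × ℤ)) ↔ _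
          simp [Prod.ext_iff]
          tauto
        have hiff : ((y = 0 ∨ y = 1)) ↔
            ∃ m : ℕ, 1 ≤ m ∧ m ≤ 0 + 1 ∧ (y = 2 ^ m - 2 ∨ y = 2 ^ m - 1) := by
          constructor
          · intro h; exact ⟨1, le_refl _, le_refl _, by norm_num; omega⟩
          · rintro ⟨m, h1, h2, h⟩
            have : m = 1 := le_antisymm h2 h1
            subst this; norm_num at h; omega
        refine ⟨?_, ?_, ?_, ?_⟩
        · rw [hmem]; simp only [hiff.symm]; tauto
        · rw [hmem]; simp only [hiff.symm]; tauto
        · rw [show (-(2 : ℤ) ^ 0) = -1 by norm_num, hmem]; norm_num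
        · rw [show ((2 : ℤ) ^ 0 - 1) = 0 by norm_num, hmem]; norm_num
  | succ i ih =>
      obtain ⟨hrange, hcols⟩ := ih
      have ht1 : (0 : ℤ) < 2 ^ i := by positivity
      have h2i1 : (2 : ℤ) ^ (i + 1) = 2 * 2 ^ i := by ring
      have h2i2 : (2 : ℤ) ^ (i + 2) = 2 * 2 ^ (i + 1) := by ring
      have hrange' : ∀ p ∈ sierpTri (i + 1),
          -(2 : ℤ) ^ (i + 1) ≤ p.1 ∧ p.1 ≤ 2 ^ (i + 1) - 1 := by
        intro p hp
        rw [sierpTri_succ_mem] at hp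
        rcases hp with hp | hp | hp
        · have := hrange p hp; omega
        · have := hrange _ hp; simp only [Prod.fst_sub] at this; omega
        · have := hrange _ hp; simp only [Prod.fst_sub, Prod.fst_neg] at this; omega
      refine ⟨hrange', ?_⟩
      -- combination lemma for the center columns
      have hcomb : ∀ y : ℤ,
          ((∃ m : ℕ, 1 ≤ m ∧ m ≤ i + 1 ∧ (y = 2 ^ m - 2 ∨ y = 2 ^ m - 1)) ∨
            (y - 2 ^ (i + 1) = 2 ^ (i + 1) - 2 ∨ y - 2 ^ (i + 1) = 2 ^ (i + 1) - 1)) ↔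
          ∃ m : ℕ, 1 ≤ m ∧ m ≤ i + 2 ∧ (y = 2 ^ m - 2 ∨ y = 2 ^ m - 1) := by
        intro y
        constructor
        · rintro (⟨m, h1, h2, h⟩ | h)
          · exact ⟨m, h1, by omega, h⟩
          · exact ⟨i + 2, by omega, le_refl _, by omega⟩
        · rintro ⟨m, h1, h2, h⟩
          rcases Nat.lt_or_ge m (i + 2) with hlt | hge
          · exact Or.inl ⟨m, h1, by omega, h⟩
          · have : m = i + 2 := by omega
            subst this
            right; omega
      intro y
      refine ⟨?_, ?_, ?_, ?_⟩
      · -- column x = -1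
        rw [sierpTri_succ_mem]
        have e1 : ((-1 : ℤ), y) - ((2 : ℤ) ^ i, 2 ^ (i + 1)) = (-1 - 2 ^ i, y - 2 ^ (i + 1)) := by
          first
            | (simp only [Prod.mk_sub_mk, Prod.mk.injEq]; constructor <;> ring)
            | simp only [Prod.mk_sub_mk, Prod.mk.injEq]
        have e2 : ((-1 : ℤ), y) - (-(2 : ℤ) ^ i, 2 ^ (i + 1)) = ((2 : ℤ) ^ i - 1, y - 2 ^ (i + 1)) := by
          first
            | (simp only [Prod.mk_sub_mk, Prod.mk.injEq]; constructor <;> ring)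
            | (simp only [Prod.mk_sub_mk, Prod.mk.injEq, and_true] <;> ring)
        rw [e1, e2]
        have h1 : ((-1 - 2 ^ i : ℤ), y - 2 ^ (i + 1)) ∉ sierpTri i := by
          intro h; have := hrange _ h; simp at this; try omega
        rw [(hcols y).1, (hcols (y - 2 ^ (i + 1))).2.2.2]
        simp only [h1, false_or]
        exact hcomb y
      · -- column x = 0
        rw [sierpTri_succ_mem]
        have e1 : ((0 : ℤ), y) - ((2 : ℤ) ^ i, 2 ^ (i + 1)) = (-(2 : ℤ) ^ i, y - 2 ^ (i + 1)) := by
          first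
            | (simp only [Prod.mk_sub_mk, Prod.mk.injEq]; constructor <;> ring)
            | (simp only [Prod.mk_sub_mk, Prod.mk.injEq, and_true] <;> ring)
        have e2 : ((0 : ℤ), y) - (-(2 : ℤ) ^ i, 2 ^ (i + 1)) = ((2 : ℤ) ^ i, y - 2 ^ (i + 1)) := by
          first
            | (simp only [Prod.mk_sub_mk, Prod.mk.injEq]; constructor <;> ring)
            | (simp only [Prod.mk_sub_mk, Prod.mk.injEq, and_true] <;> ring)
        rw [e1, e2]
        have h2 : (((2 : ℤ) ^ i), y - 2 ^ (i + 1)) ∉ sierpTri i := by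
          intro h; have := hrange _ h; simp at this; try omega
        rw [(hcols y).2.1, (hcols (y - 2 ^ (i + 1))).2.2.1]
        simp only [h2, or_false]
        exact hcomb y
      · -- left edge x = -2^(i+1)
        rw [sierpTri_succ_mem]
        have e1 : ((-(2 : ℤ) ^ (i + 1)), y) - ((2 : ℤ) ^ i, 2 ^ (i + 1)) =
            (-(2 : ℤ) ^ (i + 1) - 2 ^ i, y - 2 ^ (i + 1)) := by
          first
            | (simp only [Prod.mk_sub_mk, Prod.mk.injEq]; constructor <;> ring)
            | simp only [Prod.mk_sub_mk, Prod.mk.injEq]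
        have e2 : ((-(2 : ℤ) ^ (i + 1)), y) - (-(2 : ℤ) ^ i, 2 ^ (i + 1)) =
            (-(2 : ℤ) ^ i, y - 2 ^ (i + 1)) := by
          first
            | (simp only [Prod.mk_sub_mk, Prod.mk.injEq]; constructor <;> ring)
            | (simp only [Prod.mk_sub_mk, Prod.mk.injEq, and_true] <;> ring)
        rw [e1, e2]
        have h0 : ((-(2 : ℤ) ^ (i + 1)), y) ∉ sierpTri i := by
          intro h; have := hrange _ h; simp at this; try omega
        have h1 : ((-(2 : ℤ) ^ (i + 1) - 2 ^ i), y - 2 ^ (i + 1)) ∉ sierpTri i := by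
          intro h; have := hrange _ h; simp at this; try omega
        rw [(hcols (y - 2 ^ (i + 1))).2.2.1]
        simp only [h0, h1, false_or]
        omega
      · -- right edge x = 2^(i+1) - 1
        rw [sierpTri_succ_mem]
        have e1 : (((2 : ℤ) ^ (i + 1) - 1), y) - ((2 : ℤ) ^ i, 2 ^ (i + 1)) =
            ((2 : ℤ) ^ i - 1, y - 2 ^ (i + 1)) := by
          first
            | (simp only [Prod.mk_sub_mk, Prod.mk.injEq]; constructor <;> ring)
            | (simp only [Prod.mk_sub_mk, Prod.mk.injEq, and_true] <;> ring)
        have e2 : (((2 : ℤ) ^ (i + 1) - 1), y) - (-(2 : ℤ) ^ i, 2 ^ (i + 1)) =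
            ((2 : ℤ) ^ (i + 1) - 1 + 2 ^ i, y - 2 ^ (i + 1)) := by
          first
            | (simp only [Prod.mk_sub_mk, Prod.mk.injEq]; constructor <;> ring)
            | (simp only [Prod.mk_sub_mk, Prod.mk.injEq, and_true] <;> ring)
        rw [e1, e2]
        have h0 : (((2 : ℤ) ^ (i + 1) - 1), y) ∉ sierpTri i := by
          intro h; have := hrange _ h; simp at this; try omega
        have h2 : (((2 : ℤ) ^ (i + 1) - 1 + 2 ^ i), y - 2 ^ (i + 1)) ∉ sierpTri i := by
          intro h; have := hrange _ h; simp at this; try omega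
        rw [(hcols (y - 2 ^ (i + 1))).2.2.2]
        simp only [h0, h2, false_or, or_false]
        omega

/-- For every integer `y`, the point `(-1, y)` lies in `S_∞` iff
there is an integer `m ≥ 1` with `y = 2^m - 2` or `y = 2^m - 1`, and the same
equivalence holds for `(0, y)`: the two center columns `x = -1` and `x = 0` are
occupied exactly at heights `2^m - 2` and `2^m - 1` for `m ≥ 1`. -/
theorem sierpTriInf_center_columns (y : ℤ) :
    ((((-1 : ℤ), y) ∈ sierpTriInf) ↔
      ∃ m : ℕ, 1 ≤ m ∧ (y = 2 ^ m - 2 ∨ y = 2 ^ m - 1)) ∧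
    ((((0 : ℤ), y) ∈ sierpTriInf) ↔
      ∃ m : ℕ, 1 ≤ m ∧ (y = 2 ^ m - 2 ∨ y = 2 ^ m - 1)) := by
  constructor
  · constructor
    · rintro h
      simp only [sierpTriInf, Set.mem_iUnion, Finset.coe_sort_coe, Finset.mem_coe] at h
      obtain ⟨i, hi⟩ := h
      obtain ⟨m, h1, _, h⟩ := ((sierpTri_key i).2 y).1.mp hi
      exact ⟨m, h1, h⟩
    · rintro ⟨m, h1, h⟩
      simp only [sierpTriInf, Set.mem_iUnion, Finset.mem_coe]
      exact ⟨m - 1, ((sierpTri_key (m - 1)).2 y).1.mpr ⟨m, h1, by omega, h⟩⟩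
  · constructor
    · rintro h
      simp only [sierpTriInf, Set.mem_iUnion, Finset.coe_sort_coe, Finset.mem_coe] at h
      obtain ⟨i, hi⟩ := h
      obtain ⟨m, h1, _, h⟩ := ((sierpTri_key i).2 y).2.1.mp hi
      exact ⟨m, h1, h⟩
    · rintro ⟨m, h1, h⟩
      simp only [sierpTriInf, Set.mem_iUnion, Finset.mem_coe]
      exact ⟨m - 1, ((sierpTri_key (m - 1)).2 y).2.1.mpr ⟨m, h1, by omega, h⟩⟩
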